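/- For n ≥ 1, the operator A_j on (ℂ^d)^{⊗n} defined by A_j(ξ_{i_1}⊗⋯⊗ξ_{i_n}) = δ_{j,i_1} ξ_{i_2}⊗⋯⊗ξ_{i_n} satisfies A_j M_n^{(q)} = (L_j^{(q)})*|_{F_n^{(q)}}, i.e. A_j = (L_j^{(q)})*(M_n^{(q)})^{-1} whenever M_n^{(q)} is invertible. -/
import Mathlib


open Finset

/-- Coefficients of a vector of `F_n^{(q)} = (ℂ^d)^{⊗n}` with respect to the natural basis. -/
abbrev Tens (d n : ℕ) := (Fin n → Fin d) → ℂ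

/-- The operator `A_j : (ℂ^d)^{⊗(n+1)} → (ℂ^d)^{⊗n}` defined on the natural basis by
`A_j(ξ_{i_1}⊗⋯⊗ξ_{i_{n+1}}) = δ_{j,i_1} ξ_{i_2}⊗⋯⊗ξ_{i_{n+1}}`, on coefficients. -/
def aop {d n : ℕ} (j : Fin d) (x : Tens d (n + 1)) : Tens d n :=
  fun g => x (Fin.cons j g)

/-- The left creation operator `L_j^{(q)}` (prepending `ξ_j`), on coefficients. -/
def lcre {d n : ℕ} (j : Fin d) (x : Tens d n) : Tens d (n + 1) :=
  fun f => if f 0 = j then x (Fin.tail f) else 0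

/-- The left annihilation operator `(L_j^{(q)})*`, on coefficients. -/
noncomputable def lann {d n : ℕ} (q : ℂ) (j : Fin d) (x : Tens d (n + 1)) : Tens d n :=
  fun g => ∑ m : Fin (n + 1), q ^ (m : ℕ) * x (m.insertNth j g)

/-- With `M_n^{(q)} = Σ_i L_i^{(q)} (L_i^{(q)})*` on `F_n^{(q)}` (`n = m+1 ≥ 1`), the operator
`A_j` satisfies `A_j M_n^{(q)} = (L_j^{(q)})*|_{F_n^{(q)}}`, i.e. `A_j = (L_j^{(q)})* (M_n^{(q)})⁻¹`
whenever `M_n^{(q)}` is invertible. -/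
theorem aop_comp_Mq (d : ℕ) (hd : 2 ≤ d) (q : ℂ) (j : Fin d) (m : ℕ) (x : Tens d (m + 1)) :
    aop j (∑ i : Fin d, lcre i (lann q i x)) = lann q j x := by
  funext g
  simp [aop, lcre, Finset.sum_apply, Finset.sum_ite_eq]
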